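/- arXiv:1407.4485 — 4 statements merged into one kernel-verified Lean document; each statement's English description precedes it below -/
import Mathlib

section
/- For every n ≥ 2 and any splits U, V, T of the same 2n points, ‖U,T‖ + ‖V,T‖ ≤ 2n − d(U,V). -/
attribute [local instance] Classical.propDecidable

namespace MultiCrossing

/-- `x` lies strictly in the open clockwise arc from `a` to `b` on the circle `ZMod (2*n)`. -/
def StrictBtw (n : ℕ) (a b x : ZMod (2 * n)) : Prop :=
  0 < (x - a).val ∧ (x - a).val < (b - a).val

/-- Two chords (with four distinct endpoints) cross: exactly one of the endpoints of one
chord lies in the open clockwise arc strictly between the endpoints of the other. -/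
def Crosses (n : ℕ) (e f : Finset (ZMod (2 * n))) : Prop :=
  ∃ a b c d : ZMod (2 * n), e = {a, b} ∧ f = {c, d} ∧ a ≠ b ∧ c ≠ d ∧
    Disjoint e f ∧ Xor' (StrictBtw n a b c) (StrictBtw n a b d)

/-- A split: a non-crossing perfect matching of the `2*n` points `ZMod (2*n)`. -/
structure IsSplit (n : ℕ) (S : Finset (Finset (ZMod (2 * n)))) : Prop where
  card_two : ∀ e ∈ S, e.card = 2
  partitions : ∀ x : ZMod (2 * n), ∃! e, e ∈ S ∧ x ∈ e
  noncrossing : ∀ e ∈ S, ∀ f ∈ S, ¬ Crosses n e f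

/-- A split move transforms a split `S` into a different split `S'` sharing exactly
`n - 2` chords with `S`. -/
def SplitMove (n : ℕ) (S S' : Finset (Finset (ZMod (2 * n)))) : Prop :=
  IsSplit n S ∧ IsSplit n S' ∧ S ≠ S' ∧ (S ∩ S').card = n - 2

/-- `ChainLen R k a b` : `b` is reachable from `a` in exactly `k` steps of the relation `R`. -/
def ChainLen {α : Type*} (R : α → α → Prop) : ℕ → α → α → Prop
  | 0, a, b => a = b
  | (k + 1), a, b => ∃ c, R a c ∧ ChainLen R k c b

/-- The split distance: the minimal number of split moves transforming `S` into `T`. -/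
noncomputable def splitDist (n : ℕ) (S T : Finset (Finset (ZMod (2 * n)))) : ℕ :=
  sInf {k | ChainLen (SplitMove n) k S T}

/-- The graph on `ZMod (2*n)` whose edges are the chords of `S` together with those of `T`. -/
def unionGraph (n : ℕ) (S T : Finset (Finset (ZMod (2 * n)))) : SimpleGraph (ZMod (2 * n)) where
  Adj x y := x ≠ y ∧ ∃ e, (e ∈ S ∨ e ∈ T) ∧ x ∈ e ∧ y ∈ e
  symm := by
    constructor
    rintro x y ⟨hxy, e, he, hx, hy⟩
    exact ⟨Ne.symm hxy, e, he, hy, hx⟩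
  loopless := by
    constructor
    rintro x ⟨h, -⟩
    exact h rfl

/-- `‖S,T‖`: the number of connected components (circles) of the multigraph obtained from
the chords of `S` (drawn inside the circle) and the chords of `T` (drawn outside). -/
noncomputable def circleCount (n : ℕ) (S T : Finset (Finset (ZMod (2 * n)))) : ℕ :=
  Nat.card (unionGraph n S T).ConnectedComponent

variable {n : ℕ}

lemma val_sub' (hn : n ≠ 0) (a b : ZMod (2 * n)) :
    (a - b).val = if b.val ≤ a.val then a.val - b.val else a.val + 2 * n - b.val := by
  haveI : NeZero (2 * n) := ⟨by omega⟩
  have ha := ZMod.val_lt a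
  have hb := ZMod.val_lt b
  split_ifs with h
  · exact ZMod.val_sub h
  · have h1 : a - b = ((a.val + 2 * n - b.val : ℕ) : ZMod (2 * n)) := by
      have hle : b.val ≤ a.val + 2 * n := by omega
      rw [Nat.cast_sub hle, Nat.cast_add, ZMod.natCast_val, ZMod.natCast_val,
        ZMod.natCast_self, ZMod.cast_id, ZMod.cast_id]
      ring
    rw [h1, ZMod.val_cast_of_lt (by omega)]

lemma val_sub_coord (hn : n ≠ 0) (x u w : ZMod (2 * n)) :
    (w - u).val = if (u - x).val ≤ (w - x).val then (w - x).val - (u - x).val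
      else (w - x).val + 2 * n - (u - x).val := by
  have h : w - u = (w - x) - (u - x) := by ring
  rw [h, val_sub' hn]

lemma val_sub_cases (hn : n ≠ 0) (x u w : ZMod (2 * n)) :
    ((u - x).val ≤ (w - x).val ∧ (w - u).val = (w - x).val - (u - x).val) ∨
    ((w - x).val < (u - x).val ∧ (w - u).val = (w - x).val + 2 * n - (u - x).val) := by
  rw [val_sub_coord hn x u w]
  split_ifs with h
  · exact Or.inl ⟨h, rfl⟩
  · exact Or.inr ⟨by omega, rfl⟩

lemma coord_inj (hn : n ≠ 0) {x u w : ZMod (2 * n)} (h : (u - x).val = (w - x).val) : u = w := by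
  haveI : NeZero (2 * n) := ⟨by omega⟩
  have := ZMod.val_injective (2 * n) h
  have h2 : u - x + x = w - x + x := by rw [this]
  simpa using h2

lemma coord_ne (hn : n ≠ 0) {u w : ZMod (2 * n)} (x : ZMod (2 * n)) (h : u ≠ w) :
    (u - x).val ≠ (w - x).val := fun hc => h (coord_inj hn hc)

lemma coord_lt (hn : n ≠ 0) (x u : ZMod (2 * n)) : (u - x).val < 2 * n := by
  haveI : NeZero (2 * n) := ⟨by omega⟩
  exact ZMod.val_lt _

lemma coord_self (x : ZMod (2 * n)) : (x - x).val = 0 := by simp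

lemma coord_pos (hn : n ≠ 0) {u : ZMod (2 * n)} (x : ZMod (2 * n)) (h : u ≠ x) :
    0 < (u - x).val := by
  haveI : NeZero (2 * n) := ⟨by omega⟩
  have h1 : (u - x) ≠ 0 := sub_ne_zero.mpr h
  have h2 := (ZMod.val_eq_zero (u - x)).not.mpr h1
  omega

lemma strictBtw_swap (hn : n ≠ 0) {u v z : ZMod (2 * n)} (huv : u ≠ v) (hzu : z ≠ u)
    (hzv : z ≠ v) : StrictBtw n v u z ↔ ¬ StrictBtw n u v z := by
  have h1 := val_sub_cases hn u v z
  have h2 := val_sub_cases hn u v u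
  have e0 : (u - u).val = 0 := coord_self u
  rw [e0] at h2
  have d1 : (z - u).val ≠ 0 := (coord_pos hn u hzu).ne'
  have d2 : (v - u).val ≠ 0 := (coord_pos hn u (Ne.symm huv)).ne'
  have d3 : (z - u).val ≠ (v - u).val := coord_ne hn u hzv
  have b1 := coord_lt hn u z
  have b2 := coord_lt hn u v
  simp only [StrictBtw]
  omega

lemma pair_eq_cases {α : Type*} [DecidableEq α] {a b c d : α} (h : ({a, b} : Finset α) = {c, d}) (hab : a ≠ b) :
    (a = c ∧ b = d) ∨ (a = d ∧ b = c) := by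
  have ha : a ∈ ({c, d} : Finset α) := h ▸ Finset.mem_insert_self a {b}
  have hb : b ∈ ({c, d} : Finset α) := h ▸ Finset.mem_insert_of_mem (Finset.mem_singleton_self b)
  simp only [Finset.mem_insert, Finset.mem_singleton] at ha hb
  rcases ha with rfl | rfl
  · rcases hb with rfl | rfl
    · exact absurd rfl hab
    · exact Or.inl ⟨rfl, rfl⟩
  · rcases hb with rfl | rfl
    · exact Or.inr ⟨rfl, rfl⟩
    · exact absurd rfl hab

lemma xor_not_not {p q : Prop} : Xor' (¬ p) (¬ q) ↔ Xor' p q := by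
  simp only [Xor', xor_def]; tauto

lemma crosses_iff (hn : n ≠ 0) {a b c d : ZMod (2 * n)} (hab : a ≠ b) (hcd : c ≠ d)
    (hd : Disjoint ({a, b} : Finset (ZMod (2 * n))) ({c, d} : Finset (ZMod (2 * n)))) :
    Crosses n {a, b} {c, d} ↔ Xor' (StrictBtw n a b c) (StrictBtw n a b d) := by
  have hdis : a ≠ c ∧ a ≠ d ∧ b ≠ c ∧ b ≠ d := by
    rw [Finset.disjoint_left] at hd
    have h1 := hd (a := a) (by simp)
    have h2 := hd (a := b) (by simp)
    simp only [Finset.mem_insert, Finset.mem_singleton, not_or] at h1 h2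
    exact ⟨h1.1, h1.2, h2.1, h2.2⟩
  obtain ⟨hac, had, hbc, hbd⟩ := hdis
  constructor
  · rintro ⟨a', b', c', d', he, hf, hab', hcd', -, hx⟩
    have hswc : StrictBtw n b a c ↔ ¬ StrictBtw n a b c :=
      strictBtw_swap hn hab (Ne.symm hac) (Ne.symm hbc)
    have hswd : StrictBtw n b a d ↔ ¬ StrictBtw n a b d :=
      strictBtw_swap hn hab (Ne.symm had) (Ne.symm hbd)
    rcases pair_eq_cases he.symm hab' with ⟨rfl, rfl⟩ | ⟨rfl, rfl⟩ <;>
      rcases pair_eq_cases hf.symm hcd' with ⟨rfl, rfl⟩ | ⟨rfl, rfl⟩ <;>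
      simp only [Xor', xor_def] at hx ⊢ <;> tauto
  · intro hx
    exact ⟨a, b, c, d, rfl, rfl, hab, hcd, hd, hx⟩

lemma not_crosses_of_not_disjoint {e f : Finset (ZMod (2 * n))} (h : ¬ Disjoint e f) :
    ¬ Crosses n e f := by
  rintro ⟨a, b, c, d, -, -, -, -, hd, -⟩
  exact h hd


variable {S T : Finset (Finset (ZMod (2 * n)))}

lemma IsSplit.exists_partner (hS : IsSplit n S) (z : ZMod (2 * n)) :
    ∃ w, w ≠ z ∧ ({z, w} : Finset (ZMod (2 * n))) ∈ S := by
  obtain ⟨e, ⟨heS, hze⟩, -⟩ := hS.partitions z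
  obtain ⟨u, v, huv, rfl⟩ := Finset.card_eq_two.mp (hS.card_two e heS)
  rcases Finset.mem_insert.mp hze with rfl | hzv
  · exact ⟨v, Ne.symm huv, heS⟩
  · rw [Finset.mem_singleton] at hzv
    subst hzv
    exact ⟨u, huv, by rwa [Finset.pair_comm]⟩

noncomputable def IsSplit.partner (hS : IsSplit n S) (z : ZMod (2 * n)) : ZMod (2 * n) :=
  Classical.choose (hS.exists_partner z)

lemma IsSplit.partner_ne (hS : IsSplit n S) (z : ZMod (2 * n)) : hS.partner z ≠ z :=
  (Classical.choose_spec (hS.exists_partner z)).1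

lemma IsSplit.partner_mem (hS : IsSplit n S) (z : ZMod (2 * n)) :
    ({z, hS.partner z} : Finset (ZMod (2 * n))) ∈ S :=
  (Classical.choose_spec (hS.exists_partner z)).2

lemma IsSplit.chord_eq (hS : IsSplit n S) {e : Finset (ZMod (2 * n))} (he : e ∈ S)
    {z : ZMod (2 * n)} (hz : z ∈ e) : e = {z, hS.partner z} := by
  obtain ⟨f, -, huniq⟩ := hS.partitions z
  have h1 := huniq e ⟨he, hz⟩
  have h2 := huniq {z, hS.partner z} ⟨hS.partner_mem z, Finset.mem_insert_self z _⟩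
  rw [h1, h2]

lemma IsSplit.partner_partner (hS : IsSplit n S) (z : ZMod (2 * n)) :
    hS.partner (hS.partner z) = z := by
  have h := hS.chord_eq (hS.partner_mem z)
    (show hS.partner z ∈ ({z, hS.partner z} : Finset (ZMod (2 * n))) by simp)
  have hz : z ∈ ({hS.partner z, hS.partner (hS.partner z)} : Finset (ZMod (2 * n))) :=
    h ▸ Finset.mem_insert_self z _
  simp only [Finset.mem_insert, Finset.mem_singleton] at hz
  rcases hz with hz | hz
  · exact absurd hz.symm (hS.partner_ne z)
  · exact hz.symm

lemma IsSplit.card_eq (hn : n ≠ 0) (hS : IsSplit n S) : S.card = n := by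
  haveI : NeZero (2 * n) := ⟨by omega⟩
  have hdisj : ∀ e ∈ S, ∀ f ∈ S, e ≠ f → Disjoint e f := by
    intro e he f hf hne
    rw [Finset.disjoint_left]
    intro z hze hzf
    obtain ⟨g, -, huniq⟩ := hS.partitions z
    exact hne ((huniq e ⟨he, hze⟩).trans (huniq f ⟨hf, hzf⟩).symm)
  have hcover : S.biUnion id = Finset.univ := by
    apply Finset.eq_univ_of_forall
    intro z
    obtain ⟨e, ⟨he, hze⟩, -⟩ := hS.partitions z
    exact Finset.mem_biUnion.mpr ⟨e, he, hze⟩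
  have h1 : (S.biUnion id).card = ∑ e ∈ S, e.card := Finset.card_biUnion hdisj
  rw [hcover, Finset.card_univ] at h1
  have h2 : ∑ e ∈ S, e.card = 2 * S.card := by
    rw [Finset.sum_congr rfl hS.card_two, Finset.sum_const, smul_eq_mul, mul_comm]
  have h3 : Fintype.card (ZMod (2 * n)) = 2 * n := ZMod.card (2 * n)
  omega

lemma unionGraph_adj_of_chord {e : Finset (ZMod (2 * n))} (he : e ∈ S ∨ e ∈ T)
    {u w : ZMod (2 * n)} (hu : u ∈ e) (hw : w ∈ e) (hne : u ≠ w) :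
    (unionGraph n S T).Adj u w := ⟨hne, e, he, hu, hw⟩

lemma circleCount_le (hn : n ≠ 0) (hS : IsSplit n S) : circleCount n S T ≤ n := by
  haveI : NeZero (2 * n) := ⟨by omega⟩
  set G := unionGraph n S T with hG
  have hne : ∀ e : {e // e ∈ S}, e.1.Nonempty := fun e =>
    Finset.card_pos.mp (by rw [hS.card_two e.1 e.2]; omega)
  have hsurj2 : Function.Surjective (fun e : {e // e ∈ S} =>
      G.connectedComponentMk (Classical.choose (hne e))) := by
    intro C
    obtain ⟨v, rfl⟩ := C.exists_rep
    refine ⟨⟨{v, hS.partner v}, hS.partner_mem v⟩, ?_⟩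
    have hp := Classical.choose_spec (hne ⟨{v, hS.partner v}, hS.partner_mem v⟩)
    show G.connectedComponentMk _ = G.connectedComponentMk v
    simp only [Finset.mem_insert, Finset.mem_singleton] at hp
    rcases hp with hp | hp
    · rw [hp]
    · rw [hp]
      exact SimpleGraph.ConnectedComponent.sound
        (unionGraph_adj_of_chord (Or.inl (hS.partner_mem v)) (by simp) (by simp)
          (hS.partner_ne v)).reachable
  have h1 : Nat.card G.ConnectedComponent ≤ Nat.card {e // e ∈ S} :=
    Nat.card_le_card_of_surjective _ hsurj2
  have h2 : Nat.card {e // e ∈ S} = S.card := by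
    rw [Nat.card_eq_fintype_card, Fintype.card_coe]
  rw [circleCount]
  rw [h2, hS.card_eq hn] at h1
  exact h1

lemma walk_closed {V : Type*} {G : SimpleGraph V} (P : V → Prop)
    (hP : ∀ u w, P u → G.Adj u w → P w) : ∀ {u w : V}, G.Walk u w → P u → P w := by
  intro u w p
  induction p with
  | nil => exact id
  | cons h p ih => exact fun hu => ih (hP _ _ hu h)

lemma reachable_closed {V : Type*} {G : SimpleGraph V} (P : V → Prop)
    (hP : ∀ u w, P u → G.Adj u w → P w) {u w : V} (h : G.Reachable u w) (hu : P u) : P w := by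
  obtain ⟨p⟩ := h
  exact walk_closed P hP p hu

lemma card_lt_of_splits {V : Type*} [Finite V] {G G' : SimpleGraph V} {x y a : V}
    (hGxa : G.Reachable x a) (hGxy : G.Reachable x y)
    (hadj : ∀ u w, ¬ G.Reachable x u → (G.Adj u w ↔ G'.Adj u w))
    (hxy' : ∀ w, G'.Adj x w → w = y) (hyx' : ∀ w, G'.Adj y w → w = x)
    (hax : a ≠ x) (hay : a ≠ y) :
    Nat.card G.ConnectedComponent < Nat.card G'.ConnectedComponent := by
  haveI : Finite G.ConnectedComponent := Quot.finite _
  haveI : Finite G'.ConnectedComponent := Quot.finite _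
  have hclosed1 : ∀ u w, ¬ G.Reachable x u → G'.Reachable u w →
      G.Reachable u w ∧ ¬ G.Reachable x w := by
    intro u w hu hr
    refine reachable_closed (fun z => G.Reachable u z ∧ ¬ G.Reachable x z) ?_ hr
      ⟨SimpleGraph.Reachable.refl u, hu⟩
    rintro z z' ⟨h1, h2⟩ hadj'
    have hGz : G.Adj z z' := (hadj z z' h2).mpr hadj'
    exact ⟨h1.trans hGz.reachable, fun hx2 => h2 (hx2.trans hGz.symm.reachable)⟩
  have hclosed2 : ∀ u w, ¬ G.Reachable x u → G.Reachable u w → G'.Reachable u w := by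
    intro u w hu hr
    refine (reachable_closed (fun z => G'.Reachable u z ∧ ¬ G.Reachable x z) ?_ hr
      ⟨SimpleGraph.Reachable.refl u, hu⟩).1
    rintro z z' ⟨h1, h2⟩ hadj'
    have hGz' : G'.Adj z z' := (hadj z z' h2).mp hadj'
    exact ⟨h1.trans hGz'.reachable, fun hx2 => h2 (hx2.trans hadj'.symm.reachable)⟩
  have hxcomp : ∀ v, G'.Reachable x v → v = x ∨ v = y := by
    intro v hr
    refine reachable_closed (fun z => z = x ∨ z = y) ?_ hr (Or.inl rfl)
    rintro z z' (rfl | rfl) hadj'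
    · exact Or.inr (hxy' _ hadj')
    · exact Or.inl (hyx' _ hadj')
  classical
  let f : V → G'.ConnectedComponent := fun v =>
    if G.Reachable x v then G'.connectedComponentMk a else G'.connectedComponentMk v
  have hco : ∀ v w, G.Reachable v w → f v = f w := by
    intro v w h
    by_cases hv : G.Reachable x v
    · simp only [f, if_pos hv, if_pos (hv.trans h)]
    · have hw : ¬ G.Reachable x w := fun hw => hv (hw.trans h.symm)
      simp only [f, if_neg hv, if_neg hw]
      exact SimpleGraph.ConnectedComponent.sound (hclosed2 v w hv h)
  let F : G.ConnectedComponent → G'.ConnectedComponent := Quot.lift f hco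
  let g : Option G.ConnectedComponent → G'.ConnectedComponent := fun o =>
    o.elim (G'.connectedComponentMk x) F
  have hginj : Function.Injective g := by
    have key : ∀ C : G.ConnectedComponent, F C ≠ G'.connectedComponentMk x := by
      intro C h
      obtain ⟨v, rfl⟩ := C.exists_rep
      by_cases hv : G.Reachable x v
      · have : G'.connectedComponentMk a = G'.connectedComponentMk x := by
          simpa [F, f, if_pos hv] using h
        have := hxcomp a (SimpleGraph.ConnectedComponent.exact this.symm)
        rcases this with h' | h' <;> [exact hax h'; exact hay h']
      · have : G'.connectedComponentMk v = G'.connectedComponentMk x := by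
          simpa [F, f, if_neg hv] using h
        have hr := SimpleGraph.ConnectedComponent.exact this.symm
        rcases hxcomp v hr with h' | h'
        · exact hv (by rw [h'])
        · exact hv (by rw [h']; exact hGxy)
    rintro (_ | C1) (_ | C2) h
    · rfl
    · exact absurd (h.symm) (key C2)
    · exact absurd h (key C1)
    · congr 1
      obtain ⟨v, rfl⟩ := C1.exists_rep
      obtain ⟨w, rfl⟩ := C2.exists_rep
      have hFv : F (Quot.mk _ v) = f v := rfl
      have hFw : F (Quot.mk _ w) = f w := rfl
      have h' : f v = f w := h
      by_cases hv : G.Reachable x v <;> by_cases hw : G.Reachable x w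
      · exact Quot.sound (hv.symm.trans hw)
      · exfalso
        have : G'.connectedComponentMk a = G'.connectedComponentMk w := by
          simpa [f, if_pos hv, if_neg hw] using h'
        have hr := SimpleGraph.ConnectedComponent.exact this
        have := (hclosed1 w a hw hr.symm).1
        exact hw (hGxa.trans this.symm)
      · exfalso
        have : G'.connectedComponentMk v = G'.connectedComponentMk a := by
          simpa [f, if_neg hv, if_pos hw] using h'
        have hr := SimpleGraph.ConnectedComponent.exact this
        have := (hclosed1 v a hv hr).1
        exact hv (hGxa.trans this.symm)
      · have : G'.connectedComponentMk v = G'.connectedComponentMk w := by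
          simpa [f, if_neg hv, if_neg hw] using h'
        have hr := SimpleGraph.ConnectedComponent.exact this
        exact Quot.sound (hclosed1 v w hv hr).1
  have hle : Nat.card (Option G.ConnectedComponent) ≤ Nat.card G'.ConnectedComponent :=
    Nat.card_le_card_of_injective g hginj
  rw [Finite.card_option] at hle
  omega

lemma chainLen_trans {α : Type*} {R : α → α → Prop} {k : ℕ} :
    ∀ {j : ℕ} {a b c : α}, ChainLen R j a b → ChainLen R k b c → ChainLen R (j + k) a c := by
  intro j
  induction j with
  | zero =>
    intro a b c h1 h2
    have : a = b := h1
    subst this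
    simpa [Nat.zero_add] using h2
  | succ j ih =>
    intro a b c h1 h2
    obtain ⟨d, hd, h1'⟩ := h1
    rw [show j + 1 + k = (j + k) + 1 by omega]
    exact ⟨d, hd, ih h1' h2⟩

lemma chainLen_symm {α : Type*} {R : α → α → Prop} (hR : ∀ a b, R a b → R b a) :
    ∀ {k : ℕ} {a b : α}, ChainLen R k a b → ChainLen R k b a := by
  intro k
  induction k with
  | zero => intro a b h; exact (h : a = b).symm
  | succ k ih =>
    intro a b h
    obtain ⟨d, hd, h'⟩ := h
    have h1 : ChainLen R k b d := ih h'
    have h2 : ChainLen R 1 d a := ⟨a, hR _ _ hd, rfl⟩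
    exact chainLen_trans h1 h2

lemma pair_disjoint {α : Type*} [DecidableEq α] {a b c d : α}
    (h1 : a ≠ c) (h2 : a ≠ d) (h3 : b ≠ c) (h4 : b ≠ d) :
    Disjoint ({a, b} : Finset α) ({c, d} : Finset α) := by
  rw [Finset.disjoint_left]
  intro z hz1 hz2
  simp only [Finset.mem_insert, Finset.mem_singleton] at hz1 hz2
  rcases hz1 with rfl | rfl <;> rcases hz2 with rfl | rfl <;> tauto

set_option maxHeartbeats 2000000 in
lemma exists_move (hn2 : 2 ≤ n) (hS : IsSplit n S) (hT : IsSplit n T) (hne : S ≠ T) :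
    ∃ S', SplitMove n S S' ∧ circleCount n S T < circleCount n S' T := by
  have hn : n ≠ 0 := by omega
  haveI : NeZero (2 * n) := ⟨by omega⟩
  classical
  have hTS : ∃ e, e ∈ T ∧ e ∉ S := by
    by_contra h
    push_neg at h
    exact hne (Finset.eq_of_subset_of_card_le (fun e he => h e he)
      (by rw [hS.card_eq hn, hT.card_eq hn])).symm
  set P : Finset (ZMod (2 * n) × ZMod (2 * n)) :=
    Finset.univ.filter (fun pr => pr.1 ≠ pr.2 ∧ ({pr.1, pr.2} : Finset _) ∈ T ∧
      ({pr.1, pr.2} : Finset _) ∉ S) with hPdef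
  have hPne : P.Nonempty := by
    obtain ⟨e, heT, heS⟩ := hTS
    obtain ⟨u, v, huv, rfl⟩ := Finset.card_eq_two.mp (hT.card_two e heT)
    exact ⟨(u, v), by
      simp only [hPdef, Finset.mem_filter, Finset.mem_univ, true_and]
      exact ⟨huv, heT, heS⟩⟩
  obtain ⟨pr, hprP, hprmin⟩ := P.exists_min_image (fun pr => (pr.2 - pr.1).val) hPne
  obtain ⟨x, y⟩ := pr
  simp only [hPdef, Finset.mem_filter, Finset.mem_univ, true_and] at hprP
  obtain ⟨hxy_ne, hxyT, hxyS⟩ := hprP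
  have hmin : ∀ u v : ZMod (2 * n), u ≠ v → ({u, v} : Finset _) ∈ T →
      ({u, v} : Finset _) ∉ S → (y - x).val ≤ (v - u).val := by
    intro u v h1 h2 h3
    exact hprmin (u, v) (by
      simp only [hPdef, Finset.mem_filter, Finset.mem_univ, true_and]
      exact ⟨h1, h2, h3⟩)
  set δ := (y - x).val with hδ
  have hδpos : 0 < δ := coord_pos hn x (Ne.symm hxy_ne)
  have hδlt : δ < 2 * n := coord_lt hn x y
  -- T-partners of x and y
  have hTx : hT.partner x = y := by
    have h := hT.chord_eq hxyT (Finset.mem_insert_self x _)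
    rcases pair_eq_cases h hxy_ne with ⟨-, h2⟩ | ⟨h1, h2⟩
    · exact h2.symm
    · exact absurd h2.symm hxy_ne
  have hTy : hT.partner y = x := by
    have h := hT.chord_eq hxyT (by simp : y ∈ ({x, y} : Finset _))
    rcases pair_eq_cases h hxy_ne with ⟨h1, h2⟩ | ⟨h1, h2⟩
    · exact absurd h1 hxy_ne
    · exact h1.symm
  -- Points strictly inside the arc have S-partners strictly inside the arc
  have hA : ∀ p : ZMod (2 * n), 0 < (p - x).val → (p - x).val < δ →
      0 < (hS.partner p - x).val ∧ (hS.partner p - x).val < δ := by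
    intro p h1 h2
    have hpx : p ≠ x := fun h => by rw [h, coord_self] at h1; omega
    have hpy : p ≠ y := fun h => by rw [h, ← hδ] at h2; omega
    set q := hT.partner p with hqdef
    have hqp : q ≠ p := hT.partner_ne p
    have hpqT : ({p, q} : Finset _) ∈ T := hT.partner_mem p
    have hTq : hT.partner q = p := by rw [hqdef]; exact hT.partner_partner p
    have hqx : q ≠ x := by
      intro h; rw [h, hTx] at hTq; exact hpy hTq.symm
    have hqy : q ≠ y := by
      intro h; rw [h, hTy] at hTq; exact hpx hTq.symm
    have hq0 : 0 < (q - x).val := coord_pos hn x hqx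
    have hqδ' : (q - x).val ≠ δ := by rw [hδ]; exact coord_ne hn x hqy
    have hq_arc : (q - x).val < δ := by
      by_contra hcon
      have hNC := hT.noncrossing _ hxyT _ hpqT
      rw [crosses_iff hn hxy_ne (Ne.symm hqp)
        (pair_disjoint (Ne.symm hpx) (Ne.symm hqx) (Ne.symm hpy) (Ne.symm hqy))] at hNC
      simp only [StrictBtw, Xor', xor_def, ← hδ] at hNC
      omega
    have hpq_ne_val : (p - x).val ≠ (q - x).val := coord_ne hn x (Ne.symm hqp)
    have hpqS : ({p, q} : Finset _) ∈ S := by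
      by_contra hS'
      rcases le_or_gt (p - x).val (q - x).val with hle | hlt
      · have hm := hmin p q (Ne.symm hqp) hpqT hS'
        rcases val_sub_cases hn x p q with ⟨h3, h4⟩ | ⟨h3, h4⟩ <;> omega
      · have hm := hmin q p hqp (by rwa [Finset.pair_comm]) (by rwa [Finset.pair_comm])
        rcases val_sub_cases hn x q p with ⟨h3, h4⟩ | ⟨h3, h4⟩ <;> omega
    have hq_is : hS.partner p = q := by
      have h := hS.chord_eq hpqS (Finset.mem_insert_self p _)
      rcases pair_eq_cases h (Ne.symm hqp) with ⟨-, h2⟩ | ⟨h1, h2⟩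
      · exact h2.symm
      · exact absurd h2 hqp
    rw [hq_is]
    exact ⟨hq0, hq_arc⟩
  -- the S-partners of x and y
  set a := hS.partner x with ha
  set b := hS.partner y with hb
  have hxaS : ({x, a} : Finset _) ∈ S := hS.partner_mem x
  have hybS : ({y, b} : Finset _) ∈ S := hS.partner_mem y
  have hax : a ≠ x := hS.partner_ne x
  have hby : b ≠ y := hS.partner_ne y
  have hpa2 : hS.partner a = x := by rw [ha]; exact hS.partner_partner x
  have hpb2 : hS.partner b = y := by rw [hb]; exact hS.partner_partner y
  have hay : a ≠ y := by intro h; rw [h] at hxaS; exact hxyS hxaS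
  have hbx : b ≠ x := by
    intro h; rw [h, Finset.pair_comm] at hybS; exact hxyS hybS
  have hab_ne : a ≠ b := by
    intro h
    rw [h] at hpa2
    exact hxy_ne (hpa2.symm.trans hpb2)
  have hα0 : 0 < (a - x).val := coord_pos hn x hax
  have hβ0 : 0 < (b - x).val := coord_pos hn x hbx
  have hαlt : (a - x).val < 2 * n := coord_lt hn x a
  have hβlt : (b - x).val < 2 * n := coord_lt hn x b
  have hαδ : δ < (a - x).val := by
    have hne' : (a - x).val ≠ δ := by rw [hδ]; exact coord_ne hn x hay
    by_contra hcon
    push_neg at hcon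
    have h' := hA a hα0 (by omega)
    rw [hpa2, coord_self] at h'
    omega
  have hβδ : δ < (b - x).val := by
    have hne' : (b - x).val ≠ δ := by rw [hδ]; exact coord_ne hn x hby
    by_contra hcon
    push_neg at hcon
    have h' := hA b hβ0 (by omega)
    rw [hpb2, ← hδ] at h'
    omega
  have hβα : (b - x).val < (a - x).val := by
    have hNC1 := hS.noncrossing _ hxaS _ hybS
    rw [crosses_iff hn (Ne.symm hax) (Ne.symm hby)
      (pair_disjoint hxy_ne (Ne.symm hbx) hay hab_ne)] at hNC1
    have hαβ : (a - x).val ≠ (b - x).val := coord_ne hn x hab_ne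
    simp only [StrictBtw, Xor', xor_def, ← hδ] at hNC1
    omega
  -- classification of remaining chords
  have hclass : ∀ p : ZMod (2 * n), p ≠ x → p ≠ y → p ≠ a → p ≠ b →
      (0 < (p - x).val ∧ (p - x).val < δ ∧
        0 < (hS.partner p - x).val ∧ (hS.partner p - x).val < δ) ∨
      (δ < (p - x).val ∧ (p - x).val < (b - x).val ∧
        δ < (hS.partner p - x).val ∧ (hS.partner p - x).val < (b - x).val) ∨
      ((b - x).val < (p - x).val ∧ (p - x).val < (a - x).val ∧
        (b - x).val < (hS.partner p - x).val ∧ (hS.partner p - x).val < (a - x).val) ∨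
      ((a - x).val < (p - x).val ∧ (a - x).val < (hS.partner p - x).val) := by
    intro p hpx hpy hpa hpb
    set q := hS.partner p with hqdef
    have hqp : q ≠ p := hS.partner_ne p
    have hSq : hS.partner q = p := by rw [hqdef]; exact hS.partner_partner p
    have hqx : q ≠ x := by
      intro h; rw [h] at hSq; exact hpa (ha.trans hSq).symm
    have hqy : q ≠ y := by
      intro h; rw [h] at hSq; exact hpb (hb.trans hSq).symm
    have hqa : q ≠ a := by
      intro h; rw [h, hpa2] at hSq; exact hpx hSq.symm
    have hqb : q ≠ b := by
      intro h; rw [h, hpb2] at hSq; exact hpy hSq.symm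
    have hp0 : 0 < (p - x).val := coord_pos hn x hpx
    have hq0 : 0 < (q - x).val := coord_pos hn x hqx
    have hplt : (p - x).val < 2 * n := coord_lt hn x p
    have hqlt : (q - x).val < 2 * n := coord_lt hn x q
    have hpδ : (p - x).val ≠ δ := by rw [hδ]; exact coord_ne hn x hpy
    have hqδ : (q - x).val ≠ δ := by rw [hδ]; exact coord_ne hn x hqy
    have hpβ : (p - x).val ≠ (b - x).val := coord_ne hn x hpb
    have hqβ : (q - x).val ≠ (b - x).val := coord_ne hn x hqb
    have hpα : (p - x).val ≠ (a - x).val := coord_ne hn x hpa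
    have hqα : (q - x).val ≠ (a - x).val := coord_ne hn x hqa
    rcases lt_trichotomy (p - x).val δ with hlt | heq | hgt
    · have h' := hA p hp0 hlt
      rw [← hqdef] at h'
      exact Or.inl ⟨hp0, hlt, h'.1, h'.2⟩
    · exact absurd (coord_inj hn (heq.trans hδ)) hpy
    · have hqδ2 : δ < (q - x).val := by
        rcases lt_trichotomy (q - x).val δ with h' | h' | h'
        · exfalso
          have h'' := hA q hq0 h'
          rw [hSq] at h''
          omega
        · exact absurd (coord_inj hn (h'.trans hδ)) hqy
        · exact h'
      have hpqS : ({p, q} : Finset _) ∈ S := by rw [hqdef]; exact hS.partner_mem p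
      have hNCa := hS.noncrossing _ hxaS _ hpqS
      rw [crosses_iff hn (Ne.symm hax) (Ne.symm hqp)
        (pair_disjoint (Ne.symm hpx) (Ne.symm hqx) (Ne.symm hpa) (Ne.symm hqa))] at hNCa
      have hNCb := hS.noncrossing _ hybS _ hpqS
      rw [crosses_iff hn (Ne.symm hby) (Ne.symm hqp)
        (pair_disjoint (Ne.symm hpy) (Ne.symm hqy) (Ne.symm hpb) (Ne.symm hqb))] at hNCb
      simp only [StrictBtw, Xor', xor_def] at hNCa hNCb
      have h1 := val_sub_cases hn x y p
      have h2 := val_sub_cases hn x y q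
      have h3 := val_sub_cases hn x y b
      omega
  -- build the new split
  set S0 := ((S.erase {x, a}).erase {y, b} : Finset (Finset (ZMod (2 * n)))) with hS0def
  set S' := (insert {x, y} (insert {a, b} S0) : Finset (Finset (ZMod (2 * n)))) with hS'def
  have hS0 : ∀ e ∈ S0, e ∈ S ∧ x ∉ e ∧ y ∉ e ∧ a ∉ e ∧ b ∉ e := by
    intro e he
    obtain ⟨hne1, he2⟩ := Finset.mem_erase.mp he
    obtain ⟨hne2, heS⟩ := Finset.mem_erase.mp he2
    refine ⟨heS, ?_, ?_, ?_, ?_⟩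
    · intro hx'
      have h := hS.chord_eq heS hx'
      rw [← ha] at h
      exact hne2 h
    · intro hy'
      have h := hS.chord_eq heS hy'
      rw [← hb] at h
      exact hne1 h
    · intro ha'
      have h := hS.chord_eq heS ha'
      rw [hpa2, Finset.pair_comm] at h
      exact hne2 h
    · intro hb'
      have h := hS.chord_eq heS hb'
      rw [hpb2, Finset.pair_comm] at h
      exact hne1 h
  have hmemS' : ∀ e, e ∈ S' ↔ e = {x, y} ∨ e = {a, b} ∨ e ∈ S0 := by
    intro e
    simp only [hS'def, Finset.mem_insert]
  have hrep : ∀ g ∈ S0, ∃ p q : ZMod (2 * n), g = {p, q} ∧ hS.partner p = q ∧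
      p ≠ q ∧ p ≠ x ∧ p ≠ y ∧ p ≠ a ∧ p ≠ b ∧ q ≠ x ∧ q ≠ y ∧ q ≠ a ∧ q ≠ b := by
    intro g hg
    obtain ⟨hgS, hgx, hgy, hga, hgb⟩ := hS0 g hg
    obtain ⟨u, v, huv, rfl⟩ := Finset.card_eq_two.mp (hS.card_two g hgS)
    have hu : u ∈ ({u, v} : Finset _) := Finset.mem_insert_self u _
    have hv : v ∈ ({u, v} : Finset _) := by simp
    have hpart : hS.partner u = v := by
      have h := hS.chord_eq hgS hu
      rcases pair_eq_cases h huv with ⟨-, h2⟩ | ⟨h1, h2⟩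
      · exact h2.symm
      · exact absurd h2.symm huv
    exact ⟨u, v, rfl, hpart, huv,
      fun h => hgx (h ▸ hu), fun h => hgy (h ▸ hu), fun h => hga (h ▸ hu),
      fun h => hgb (h ▸ hu), fun h => hgx (h ▸ hv), fun h => hgy (h ▸ hv),
      fun h => hga (h ▸ hv), fun h => hgb (h ▸ hv)⟩
  have hsplit' : IsSplit n S' := by
    refine ⟨?_, ?_, ?_⟩
    · intro e he
      rcases (hmemS' e).mp he with rfl | rfl | he0
      · exact Finset.card_pair hxy_ne
      · exact Finset.card_pair hab_ne
      · exact hS.card_two e (hS0 e he0).1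
    · intro z
      have hxyS' : ({x, y} : Finset _) ∈ S' := (hmemS' _).mpr (Or.inl rfl)
      have habS' : ({a, b} : Finset _) ∈ S' := (hmemS' _).mpr (Or.inr (Or.inl rfl))
      by_cases hzx : z = x
      · subst hzx
        refine ⟨{z, y}, ⟨hxyS', by simp⟩, ?_⟩
        rintro f ⟨hf, hzf⟩
        rcases (hmemS' f).mp hf with rfl | rfl | hf0
        · rfl
        · simp only [Finset.mem_insert, Finset.mem_singleton] at hzf
          rcases hzf with h' | h'
          · exact absurd h'.symm hax
          · exact absurd h'.symm hbx
        · exact absurd hzf (hS0 f hf0).2.1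
      by_cases hzy : z = y
      · subst hzy
        refine ⟨{x, z}, ⟨hxyS', by simp⟩, ?_⟩
        rintro f ⟨hf, hzf⟩
        rcases (hmemS' f).mp hf with rfl | rfl | hf0
        · rfl
        · simp only [Finset.mem_insert, Finset.mem_singleton] at hzf
          rcases hzf with h' | h'
          · exact absurd h'.symm hay
          · exact absurd h'.symm hby
        · exact absurd hzf (hS0 f hf0).2.2.1
      by_cases hza : z = a
      · subst hza
        refine ⟨{a, b}, ⟨habS', by simp⟩, ?_⟩
        rintro f ⟨hf, hzf⟩
        rcases (hmemS' f).mp hf with rfl | rfl | hf0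
        · simp only [Finset.mem_insert, Finset.mem_singleton] at hzf
          rcases hzf with h' | h'
          · exact absurd h' hax
          · exact absurd h' hay
        · rfl
        · exact absurd hzf (hS0 f hf0).2.2.2.1
      by_cases hzb : z = b
      · subst hzb
        refine ⟨{a, b}, ⟨habS', by simp⟩, ?_⟩
        rintro f ⟨hf, hzf⟩
        rcases (hmemS' f).mp hf with rfl | rfl | hf0
        · simp only [Finset.mem_insert, Finset.mem_singleton] at hzf
          rcases hzf with h' | h'
          · exact absurd h' hbx
          · exact absurd h' hby
        · rfl
        · exact absurd hzf (hS0 f hf0).2.2.2.2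
      · -- generic point
        have hchord : ({z, hS.partner z} : Finset _) ∈ S := hS.partner_mem z
        have hne1 : ({z, hS.partner z} : Finset _) ≠ {x, a} := by
          intro h
          have : z ∈ ({x, a} : Finset _) := h ▸ Finset.mem_insert_self z _
          simp only [Finset.mem_insert, Finset.mem_singleton] at this
          tauto
        have hne2 : ({z, hS.partner z} : Finset _) ≠ {y, b} := by
          intro h
          have : z ∈ ({y, b} : Finset _) := h ▸ Finset.mem_insert_self z _
          simp only [Finset.mem_insert, Finset.mem_singleton] at this
          tauto
        have hmem0 : ({z, hS.partner z} : Finset _) ∈ S0 := by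
          rw [hS0def]
          exact Finset.mem_erase.mpr ⟨hne2, Finset.mem_erase.mpr ⟨hne1, hchord⟩⟩
        refine ⟨{z, hS.partner z}, ⟨(hmemS' _).mpr (Or.inr (Or.inr hmem0)), by simp⟩, ?_⟩
        rintro f ⟨hf, hzf⟩
        rcases (hmemS' f).mp hf with rfl | rfl | hf0
        · simp only [Finset.mem_insert, Finset.mem_singleton] at hzf
          tauto
        · simp only [Finset.mem_insert, Finset.mem_singleton] at hzf
          tauto
        · exact hS.chord_eq (hS0 f hf0).1 hzf
    · -- noncrossing
      intro e he f hf
      have key_xy_ab : ¬ Crosses n {x, y} {a, b} := by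
        rw [crosses_iff hn hxy_ne hab_ne
          (pair_disjoint (Ne.symm hax) (Ne.symm hbx) (Ne.symm hay) (Ne.symm hby))]
        simp only [StrictBtw, Xor', xor_def, ← hδ]
        omega
      have key_ab_xy : ¬ Crosses n {a, b} {x, y} := by
        rw [crosses_iff hn hab_ne hxy_ne
          (pair_disjoint hax hay hbx hby)]
        have e1 := val_sub_cases hn x a x
        have e2 := val_sub_cases hn x a y
        have e3 := val_sub_cases hn x a b
        have e0 : (x - x).val = 0 := coord_self x
        simp only [StrictBtw, Xor', xor_def, ← hδ]
        omega
      rcases (hmemS' e).mp he with rfl | rfl | he0 <;> rcases (hmemS' f).mp hf with rfl | rfl | hf0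
      · exact not_crosses_of_not_disjoint (by simp [Finset.disjoint_left])
      · exact key_xy_ab
      · -- {x,y} vs g
        obtain ⟨p, q, rfl, hpq, hpqne, hp1, hp2, hp3, hp4, hq1, hq2, hq3, hq4⟩ := hrep f hf0
        have hcl := hclass p hp1 hp2 hp3 hp4
        rw [hpq] at hcl
        rw [crosses_iff hn hxy_ne hpqne
          (pair_disjoint (Ne.symm hp1) (Ne.symm hq1) (Ne.symm hp2) (Ne.symm hq2))]
        simp only [StrictBtw, Xor', xor_def, ← hδ]
        omega
      · exact key_ab_xy
      · exact not_crosses_of_not_disjoint (by simp [Finset.disjoint_left])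
      · -- {a,b} vs g
        obtain ⟨p, q, rfl, hpq, hpqne, hp1, hp2, hp3, hp4, hq1, hq2, hq3, hq4⟩ := hrep f hf0
        have hcl := hclass p hp1 hp2 hp3 hp4
        rw [hpq] at hcl
        rw [crosses_iff hn hab_ne hpqne
          (pair_disjoint (Ne.symm hp3) (Ne.symm hq3) (Ne.symm hp4) (Ne.symm hq4))]
        have e1 := val_sub_cases hn x a p
        have e2 := val_sub_cases hn x a q
        have e3 := val_sub_cases hn x a b
        have hplt : (p - x).val < 2 * n := coord_lt hn x p
        have hqlt : (q - x).val < 2 * n := coord_lt hn x q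
        simp only [StrictBtw, Xor', xor_def, ← hδ]
        omega
      · -- g vs {x,y}
        obtain ⟨p, q, rfl, hpq, hpqne, hp1, hp2, hp3, hp4, hq1, hq2, hq3, hq4⟩ := hrep e he0
        have hcl := hclass p hp1 hp2 hp3 hp4
        rw [hpq] at hcl
        rw [crosses_iff hn hpqne hxy_ne
          (pair_disjoint hp1 hp2 hq1 hq2)]
        have e1 := val_sub_cases hn x p x
        have e2 := val_sub_cases hn x p y
        have e3 := val_sub_cases hn x p q
        have e0 : (x - x).val = 0 := coord_self x
        have hplt : (p - x).val < 2 * n := coord_lt hn x p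
        have hqlt : (q - x).val < 2 * n := coord_lt hn x q
        simp only [StrictBtw, Xor', xor_def, ← hδ]
        omega
      · -- g vs {a,b}
        obtain ⟨p, q, rfl, hpq, hpqne, hp1, hp2, hp3, hp4, hq1, hq2, hq3, hq4⟩ := hrep e he0
        have hcl := hclass p hp1 hp2 hp3 hp4
        rw [hpq] at hcl
        rw [crosses_iff hn hpqne hab_ne
          (pair_disjoint hp3 hp4 hq3 hq4)]
        have e1 := val_sub_cases hn x p a
        have e2 := val_sub_cases hn x p b
        have e3 := val_sub_cases hn x p q
        have hplt : (p - x).val < 2 * n := coord_lt hn x p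
        have hqlt : (q - x).val < 2 * n := coord_lt hn x q
        simp only [StrictBtw, Xor', xor_def, ← hδ]
        omega
      · exact hS.noncrossing _ (hS0 e he0).1 _ (hS0 f hf0).1
  -- the split move
  have hxyS' : ({x, y} : Finset _) ∈ S' := (hmemS' _).mpr (Or.inl rfl)
  have hSS' : S ≠ S' := by
    intro h
    rw [← h] at hxyS'
    exact hxyS hxyS'
  have habS : ({a, b} : Finset _) ∉ S := by
    intro h
    have h2 := hS.chord_eq h (Finset.mem_insert_self a _)
    rw [hpa2] at h2
    have : b ∈ ({a, x} : Finset _) := h2 ▸ (by simp : b ∈ ({a, b} : Finset _))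
    simp only [Finset.mem_insert, Finset.mem_singleton] at this
    rcases this with h' | h'
    · exact hab_ne h'.symm
    · exact hbx h'
  have hinter : S ∩ S' = S0 := by
    apply Finset.Subset.antisymm
    · intro e he
      obtain ⟨heS, heS'⟩ := Finset.mem_inter.mp he
      rcases (hmemS' e).mp heS' with rfl | rfl | h0
      · exact absurd heS hxyS
      · exact absurd heS habS
      · exact h0
    · intro e he
      exact Finset.mem_inter.mpr ⟨(hS0 e he).1, (hmemS' e).mpr (Or.inr (Or.inr he))⟩
  have hybmem : ({y, b} : Finset _) ∈ S.erase {x, a} := by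
    refine Finset.mem_erase.mpr ⟨?_, hybS⟩
    intro h
    have : y ∈ ({x, a} : Finset _) := h ▸ Finset.mem_insert_self y _
    simp only [Finset.mem_insert, Finset.mem_singleton] at this
    rcases this with h' | h'
    · exact hxy_ne h'.symm
    · exact hay h'.symm
  have hcard : (S ∩ S').card = n - 2 := by
    rw [hinter, hS0def, Finset.card_erase_of_mem hybmem, Finset.card_erase_of_mem hxaS,
      hS.card_eq hn]
    omega
  -- circle count increases
  have hGxa : (unionGraph n S T).Reachable x a :=
    (unionGraph_adj_of_chord (Or.inl hxaS) (by simp) (by simp) (Ne.symm hax)).reachable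
  have hGxy : (unionGraph n S T).Reachable x y :=
    (unionGraph_adj_of_chord (Or.inr hxyT) (by simp) (by simp) hxy_ne).reachable
  have hGyb : (unionGraph n S T).Reachable y b :=
    (unionGraph_adj_of_chord (Or.inl hybS) (by simp) (by simp) (Ne.symm hby)).reachable
  have hcount : Nat.card (unionGraph n S T).ConnectedComponent <
      Nat.card (unionGraph n S' T).ConnectedComponent := by
    apply card_lt_of_splits (x := x) (y := y) (a := a) hGxa hGxy
    · -- adjacency transfer
      intro u w hu
      have hux : u ≠ x := fun h => hu (by rw [h])
      have huy : u ≠ y := fun h => hu (by rw [h]; exact hGxy)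
      have hua : u ≠ a := fun h => hu (by rw [h]; exact hGxa)
      have hub : u ≠ b := fun h => hu (by rw [h]; exact hGxy.trans hGyb)
      constructor
      · rintro ⟨hne', e, he, hue, hwe⟩
        refine ⟨hne', e, ?_, hue, hwe⟩
        rcases he with heS | heT
        · have h1 : e ≠ ({x, a} : Finset _) := by
            intro h
            rw [h] at hue
            simp only [Finset.mem_insert, Finset.mem_singleton] at hue
            tauto
          have h2 : e ≠ ({y, b} : Finset _) := by
            intro h
            rw [h] at hue
            simp only [Finset.mem_insert, Finset.mem_singleton] at hue
            tauto
          exact Or.inl ((hmemS' e).mpr (Or.inr (Or.inr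
            (Finset.mem_erase.mpr ⟨h2, Finset.mem_erase.mpr ⟨h1, heS⟩⟩))))
        · exact Or.inr heT
      · rintro ⟨hne', e, he, hue, hwe⟩
        refine ⟨hne', e, ?_, hue, hwe⟩
        rcases he with heS' | heT
        · rcases (hmemS' e).mp heS' with rfl | rfl | h0
          · simp only [Finset.mem_insert, Finset.mem_singleton] at hue
            tauto
          · simp only [Finset.mem_insert, Finset.mem_singleton] at hue
            tauto
          · exact Or.inl (hS0 e h0).1
        · exact Or.inr heT
    · -- neighbors of x in G'
      rintro w ⟨hne', e, he, hxe, hwe⟩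
      rcases he with heS' | heT
      · rcases (hmemS' e).mp heS' with rfl | rfl | h0
        · simp only [Finset.mem_insert, Finset.mem_singleton] at hwe
          rcases hwe with h' | h'
          · exact absurd h'.symm hne'
          · exact h'
        · exfalso
          simp only [Finset.mem_insert, Finset.mem_singleton] at hxe
          rcases hxe with h' | h'
          · exact hax h'.symm
          · exact hbx h'.symm
        · exact absurd hxe (hS0 e h0).2.1
      · have h := hT.chord_eq heT hxe
        rw [hTx] at h
        rw [h] at hwe
        simp only [Finset.mem_insert, Finset.mem_singleton] at hwe
        rcases hwe with h' | h'
        · exact absurd h'.symm hne'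
        · exact h'
    · -- neighbors of y in G'
      rintro w ⟨hne', e, he, hye, hwe⟩
      rcases he with heS' | heT
      · rcases (hmemS' e).mp heS' with rfl | rfl | h0
        · simp only [Finset.mem_insert, Finset.mem_singleton] at hwe
          rcases hwe with h' | h'
          · exact h'
          · exact absurd h'.symm hne'
        · exfalso
          simp only [Finset.mem_insert, Finset.mem_singleton] at hye
          rcases hye with h' | h'
          · exact hay h'.symm
          · exact hby h'.symm
        · exact absurd hye (hS0 e h0).2.2.1
      · have h := hT.chord_eq heT hye
        rw [hTy] at h
        rw [h] at hwe
        simp only [Finset.mem_insert, Finset.mem_singleton] at hwe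
        rcases hwe with h' | h'
        · exact absurd h'.symm hne'
        · exact h'
    · exact hax
    · exact hay
  exact ⟨S', ⟨hS, hsplit', hSS', hcard⟩, hcount⟩

lemma exists_chain (hn2 : 2 ≤ n) :
    ∀ (m : ℕ) (S T : Finset (Finset (ZMod (2 * n)))), IsSplit n S → IsSplit n T →
      n - circleCount n S T ≤ m →
      ∃ k, ChainLen (SplitMove n) k S T ∧ k + circleCount n S T ≤ n := by
  have hn : n ≠ 0 := by omega
  intro m
  induction m with
  | zero =>
    intro S T hS hT hm
    by_cases he : S = T
    · subst he
      exact ⟨0, rfl, by have := circleCount_le (T := S) hn hS; omega⟩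
    · obtain ⟨S', hmove, hlt⟩ := exists_move hn2 hS hT he
      have h1 := circleCount_le (T := T) hn hmove.2.1
      omega
  | succ m ih =>
    intro S T hS hT hm
    by_cases he : S = T
    · subst he
      exact ⟨0, rfl, by have := circleCount_le (T := S) hn hS; omega⟩
    · obtain ⟨S', hmove, hlt⟩ := exists_move hn2 hS hT he
      have hb := circleCount_le (T := T) hn hmove.2.1
      obtain ⟨k, hchain, hk⟩ := ih S' T hmove.2.1 hT (by omega)
      exact ⟨k + 1, ⟨S', hmove, hchain⟩, by omega⟩

/-- For every `n ≥ 2` and any splits `U`, `V`, `T` of the same `2n` points,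
`‖U,T‖ + ‖V,T‖ ≤ 2n - d(U,V)`. -/
theorem circleCount_add_circleCount_le (n : ℕ) (hn : 2 ≤ n)
    (U V T : Finset (Finset (ZMod (2 * n))))
    (hU : IsSplit n U) (hV : IsSplit n V) (hT : IsSplit n T) :
    circleCount n U T + circleCount n V T ≤ 2 * n - splitDist n U V := by
  obtain ⟨kU, hcU, hkU⟩ := exists_chain hn (n - circleCount n U T) U T hU hT le_rfl
  obtain ⟨kV, hcV, hkV⟩ := exists_chain hn (n - circleCount n V T) V T hV hT le_rfl
  have hsym : ∀ A B : Finset (Finset (ZMod (2 * n))), SplitMove n A B → SplitMove n B A := by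
    rintro A B ⟨h1, h2, h3, h4⟩
    exact ⟨h2, h1, h3.symm, by rwa [Finset.inter_comm]⟩
  have hUV : ChainLen (SplitMove n) (kU + kV) U V :=
    chainLen_trans hcU (chainLen_symm hsym hcV)
  have hd : splitDist n U V ≤ kU + kV := Nat.sInf_le hUV
  omega


end MultiCrossing
end

section
/- For every split T of 2n points and every g ∈ ZMod (2n), f_T(g) ≡ n (mod 2); in particular, when n is odd every diameter D_g intersects at least one chord of T. -/
attribute [local instance] Classical.propDecidable

namespace MultiCrossing

/-- `A_g = {g, g+1, …, g+n-1}`: the clockwise half-circle starting at `g`. -/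
def InArc (n : ℕ) (g x : ZMod (2 * n)) : Prop := (x - g).val < n

/-- A chord `e` intersects the diameter `D_g` if exactly one of its endpoints lies in `A_g`. -/
def HitsDiam (n : ℕ) (g : ZMod (2 * n)) (e : Finset (ZMod (2 * n))) : Prop :=
  (e.filter (fun x => InArc n g x)).card = 1

/-- `f_T(g)`: the number of chords of `T` intersecting the diameter `D_g`
(the paper's `|I(O,T)|` for the overstrand `O` in position `g`). -/
noncomputable def hitCount (n : ℕ) (T : Finset (Finset (ZMod (2 * n)))) (g : ZMod (2 * n)) : ℕ :=
  (T.filter (fun e => HitsDiam n g e)).card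

/-- `cr_S(g,g')`: the number of chords of `S` intersecting both diameters `D_g` and `D_g'`
(the paper's `|I(O,O',S)|`). -/
noncomputable def crossHitCount (n : ℕ) (S : Finset (Finset (ZMod (2 * n))))
    (g g' : ZMod (2 * n)) : ℕ :=
  (S.filter (fun e => HitsDiam n g e ∧ HitsDiam n g' e)).card

/-- For every split `T` of `2n` points and every `g ∈ ZMod (2n)`, `f_T(g) ≡ n (mod 2)`;
in particular, when `n` is odd every diameter `D_g` intersects at least one chord of `T`. -/
theorem hitCount_parity (n : ℕ) (hn : 1 ≤ n)
    (T : Finset (Finset (ZMod (2 * n)))) (hT : IsSplit n T) (g : ZMod (2 * n)) :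
    hitCount n T g ≡ n [MOD 2] ∧ (Odd n → 0 < hitCount n T g) := by
  classical
  haveI : NeZero (2 * n) := ⟨by omega⟩
  -- the arc A_g has exactly n points
  have harc : (Finset.univ.filter fun x : ZMod (2 * n) => InArc n g x).card = n := by
    conv_rhs => rw [← Finset.card_range n]
    apply Finset.card_bij' (fun x _ => (x - g).val)
      (fun i _ => g + (i : ZMod (2 * n)))
    · intro x hx
      simp only [Finset.mem_filter] at hx
      simpa [Finset.mem_range, InArc] using hx.2
    · intro i hi
      simp only [Finset.mem_range] at hi
      simp only [Finset.mem_filter, Finset.mem_univ, true_and]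
      show ((g + (i : ZMod (2 * n))) - g).val < n
      rw [add_sub_cancel_left, ZMod.val_natCast_of_lt (by omega)]
      exact hi
    · intro x hx
      rw [ZMod.natCast_val, ZMod.cast_id]
      ring
    · intro i hi
      simp only [Finset.mem_range] at hi
      rw [add_sub_cancel_left, ZMod.val_natCast_of_lt (by omega)]
  -- the chords partition the arc
  have hbi : T.biUnion (fun e => e.filter fun x => InArc n g x)
      = Finset.univ.filter fun x : ZMod (2 * n) => InArc n g x := by
    ext x
    simp only [Finset.mem_biUnion, Finset.mem_filter, Finset.mem_univ, true_and]
    constructor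
    · rintro ⟨e, _, _, hPx⟩; exact hPx
    · intro hPx
      obtain ⟨e, ⟨heT, hxe⟩, -⟩ := hT.partitions x
      exact ⟨e, heT, hxe, hPx⟩
  have hsum : (∑ e ∈ T, (e.filter fun x => InArc n g x).card) = n := by
    conv_rhs => rw [← harc, ← hbi]
    rw [Finset.card_biUnion]
    intro e he f hf hef
    rw [Function.onFun, Finset.disjoint_left]
    intro x hxe hxf
    simp only [Finset.mem_filter] at hxe hxf
    obtain ⟨u, -, huniq⟩ := hT.partitions x
    exact hef ((huniq e ⟨he, hxe.1⟩).trans (huniq f ⟨hf, hxf.1⟩).symm)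
  have hmod : hitCount n T g ≡ n [MOD 2] := by
    unfold hitCount HitsDiam Nat.ModEq
    conv_rhs => rw [← hsum]
    rw [Finset.card_filter, Finset.sum_nat_mod,
      Finset.sum_nat_mod T 2 (fun e => (e.filter fun x => InArc n g x).card)]
    congr 1
    apply Finset.sum_congr rfl
    intro e he
    have h2 : (e.filter fun x => InArc n g x).card ≤ 2 :=
      (Finset.card_filter_le _ _).trans (hT.card_two e he).le
    set c := (e.filter fun x => InArc n g x).card with hc
    interval_cases c <;> simp
  refine ⟨hmod, fun hodd => ?_⟩
  have h1 : n % 2 = 1 := Nat.odd_iff.mp hodd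
  have := hmod
  unfold Nat.ModEq at this
  omega

end MultiCrossing
end

section
/- Let T be a split of 2n points and g ∈ ZMod (2n). If f_T(g) = n, then T is the parallel split {{g+k, g−1−k} : 0 ≤ k ≤ n−1} (indices taken in ZMod (2n)); in particular the parallel split is the unique split all n of whose chords intersect D_g. Moreover, for this parallel split T one has f_T(g+j) = n − 2j for every integer j with 0 ≤ j ≤ ⌊n/2⌋. -/
attribute [local instance] Classical.propDecidable

namespace MultiCrossing

section Helpers

variable {n : ℕ} [NeZero (2 * n)]

lemma idx_inj {g x y : ZMod (2 * n)} (h : (x - g).val = (y - g).val) : x = y := by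
  have h2 : x - g = y - g := ZMod.val_injective _ h
  have := congrArg (· + g) h2
  simpa using this

lemma idx_ne {g x y : ZMod (2 * n)} (h : (x - g).val ≠ (y - g).val) : x ≠ y :=
  fun hxy => h (by rw [hxy])

lemma val_shift (g : ZMod (2 * n)) {m : ℕ} (hm : m < 2 * n) :
    (g + (m : ZMod (2 * n)) - g).val = m := by
  simp [ZMod.val_cast_of_lt hm]

lemma hits_pair {g x y : ZMod (2 * n)} (hxy : x ≠ y) :
    HitsDiam n g {x, y} ↔ Xor' (InArc n g x) (InArc n g y) := by
  unfold HitsDiam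
  rw [show ({x, y} : Finset (ZMod (2 * n))) = insert x {y} from rfl,
    Finset.filter_insert, Finset.filter_singleton]
  by_cases hx : InArc n g x <;> by_cases hy : InArc n g y <;>
    simp [hx, hy, Xor', hxy, Finset.card_insert_of_notMem]

lemma crosses_of_idx (g a b c d : ZMod (2 * n))
    (h1 : (a - g).val < (c - g).val) (h2 : (c - g).val < (b - g).val)
    (h3 : (b - g).val < (d - g).val) :
    Crosses n {a, b} {c, d} := by
  have key : ∀ x y : ZMod (2 * n), (x - g).val ≤ (y - g).val →
      (y - x).val = (y - g).val - (x - g).val := by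
    intro x y hxy
    have h : y - x = (y - g) - (x - g) := by ring
    rw [h, ZMod.val_sub hxy]
  have hca := key a c (by omega)
  have hba := key a b (by omega)
  have hda := key a d (by omega)
  refine ⟨a, b, c, d, rfl, rfl, idx_ne (g := g) (by omega), idx_ne (g := g) (by omega), ?_, ?_⟩
  · rw [Finset.disjoint_left]
    intro z hz hz'
    simp only [Finset.mem_insert, Finset.mem_singleton] at hz hz'
    rcases hz with rfl | rfl <;> rcases hz' with h | h <;>
      exact absurd h (idx_ne (g := g) (by omega))
  · exact Or.inl ⟨⟨by omega, by omega⟩, fun h => absurd h.2 (by omega)⟩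

lemma pair_other {α : Type*} [DecidableEq α] {s : Finset α} (h : s.card = 2) {x : α} (hx : x ∈ s) :
    ∃ y, y ≠ x ∧ s = {x, y} := by
  obtain ⟨u, v, huv, rfl⟩ := Finset.card_eq_two.mp h
  rcases Finset.mem_insert.mp hx with rfl | h'
  · exact ⟨v, huv.symm, rfl⟩
  · rw [Finset.mem_singleton] at h'
    subst h'
    exact ⟨u, huv, by rw [Finset.pair_comm]⟩

end Helpers

/-- If `f_T(g) = n`, then `T` is the parallel split `{{g+k, g-1-k} : 0 ≤ k ≤ n-1}`; in
particular the parallel split is the unique split all `n` of whose chords intersect `D_g`.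
Moreover, for this parallel split `T` one has `f_T(g+j) = n - 2j` for all `0 ≤ j ≤ ⌊n/2⌋`. -/
theorem hitCount_eq_n_iff_parallel (n : ℕ) (hn : 1 ≤ n)
    (T : Finset (Finset (ZMod (2 * n)))) (hT : IsSplit n T) (g : ZMod (2 * n))
    (hfull : hitCount n T g = n) :
    T = (Finset.range n).image
        (fun k : ℕ => ({g + (k : ZMod (2 * n)), g - 1 - (k : ZMod (2 * n))} :
          Finset (ZMod (2 * n)))) ∧
    (∀ j : ℕ, j ≤ n / 2 → hitCount n T (g + (j : ZMod (2 * n))) = n - 2 * j) := by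
  haveI : NeZero (2 * n) := ⟨by omega⟩
  -- uniqueness of chords through a point
  have huniq : ∀ e ∈ T, ∀ f ∈ T, ∀ x : ZMod (2 * n), x ∈ e → x ∈ f → e = f := by
    intro e he f hf x hxe hxf
    obtain ⟨u, -, hu⟩ := hT.partitions x
    rw [hu e ⟨he, hxe⟩, hu f ⟨hf, hxf⟩]
  -- T has n chords
  have hcardT : T.card = n := by
    have h1 : T.biUnion id = Finset.univ := by
      ext x
      simp only [Finset.mem_biUnion, id, Finset.mem_univ, iff_true]
      obtain ⟨e, ⟨he, hxe⟩, -⟩ := hT.partitions x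
      exact ⟨e, he, hxe⟩
    have h2 : (T.biUnion id).card = ∑ e ∈ T, e.card :=
      Finset.card_biUnion (fun e he f hf hef =>
        Finset.disjoint_left.mpr fun x hxe hxf => hef (huniq e he f hf x hxe hxf))
    have h3 : ∑ e ∈ T, e.card = 2 * T.card := by
      rw [Finset.sum_congr rfl hT.card_two, Finset.sum_const, smul_eq_mul, mul_comm]
    have h4 : (Finset.univ : Finset (ZMod (2 * n))).card = 2 * n := by
      rw [Finset.card_univ, ZMod.card]
    have h5 : (T.biUnion id).card = (Finset.univ : Finset (ZMod (2 * n))).card := by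
      rw [h1]
    omega
  -- every chord hits D_g
  have hall : ∀ e ∈ T, HitsDiam n g e := by
    have hle : T.card ≤ (T.filter (fun e => HitsDiam n g e)).card := by
      have h5 : hitCount n T g = (T.filter (fun e => HitsDiam n g e)).card := rfl
      omega
    have heq := Finset.eq_of_subset_of_card_le (Finset.filter_subset _ _) hle
    intro e he
    rw [← heq] at he
    exact (Finset.mem_filter.mp he).2
  -- the key induction: point g+(n-1-k) is matched to g+(n+k)
  have key : ∀ k, k < n →
      ({g + ((n - 1 - k : ℕ) : ZMod (2 * n)), g + ((n + k : ℕ) : ZMod (2 * n))} :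
        Finset (ZMod (2 * n))) ∈ T := by
    intro k
    induction k using Nat.strong_induction_on with
    | _ k IH =>
      intro hk
      set a : ZMod (2 * n) := g + ((n - 1 - k : ℕ) : ZMod (2 * n)) with ha
      have hia : (a - g).val = n - 1 - k := val_shift g (by omega)
      obtain ⟨e, ⟨heT, hae⟩, -⟩ := hT.partitions a
      obtain ⟨b, hba, hepair⟩ := pair_other (hT.card_two e heT) hae
      -- b is not in the arc
      have hhit := (hits_pair hba.symm).mp (hepair ▸ hall e heT)
      have hInA : InArc n g a := by rw [InArc, hia]; omega
      have hbB : ¬ InArc n g b := by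
        rcases hhit with ⟨-, h⟩ | ⟨-, h⟩
        · exact h
        · exact absurd hInA h
      rw [InArc, not_lt] at hbB
      set t : ℕ := (b - g).val - n with hts
      have hibval : (b - g).val = n + t := by
        have := ZMod.val_lt (b - g); omega
      have htn : t < n := by have := ZMod.val_lt (b - g); omega
      have hbform : b = g + ((n + t : ℕ) : ZMod (2 * n)) := by
        apply idx_inj (g := g)
        rw [hibval, val_shift g (by omega)]
      -- t ≥ k: otherwise b belongs to an earlier chord
      have htk : k ≤ t := by
        by_contra hlt
        push_neg at hlt
        have hIHt := IH t hlt (by omega)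
        have hbmem : b ∈ ({g + ((n - 1 - t : ℕ) : ZMod (2 * n)),
            g + ((n + t : ℕ) : ZMod (2 * n))} : Finset (ZMod (2 * n))) := by
          rw [hbform]; exact Finset.mem_insert_of_mem (Finset.mem_singleton_self _)
        have hbe : b ∈ e := hepair ▸ Finset.mem_insert_of_mem (Finset.mem_singleton_self _)
        have := huniq e heT _ hIHt b hbe hbmem
        have hamem : a ∈ ({g + ((n - 1 - t : ℕ) : ZMod (2 * n)),
            g + ((n + t : ℕ) : ZMod (2 * n))} : Finset (ZMod (2 * n))) := this ▸ hae
        rcases Finset.mem_insert.mp hamem with h | h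
        · have := congrArg (fun z => (z - g).val) h
          simp only [hia, val_shift g (show n - 1 - t < 2 * n by omega)] at this
          omega
        · rw [Finset.mem_singleton] at h
          have := congrArg (fun z => (z - g).val) h
          simp only [hia, val_shift g (show n + t < 2 * n by omega)] at this
          omega
      -- t = k: otherwise the chord through g+(n+k) crosses e
      have htkk : t = k := by
        by_contra hne
        have htgt : k < t := by omega
        set b' : ZMod (2 * n) := g + ((n + k : ℕ) : ZMod (2 * n)) with hb'
        have hib' : (b' - g).val = n + k := val_shift g (by omega)
        obtain ⟨f, ⟨hfT, hb'f⟩, -⟩ := hT.partitions b'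
        obtain ⟨c, hcb', hfpair⟩ := pair_other (hT.card_two f hfT) hb'f
        have hhitf := (hits_pair hcb'.symm).mp (hfpair ▸ hall f hfT)
        have hInB' : ¬ InArc n g b' := by rw [InArc, hib']; omega
        have hcA : InArc n g c := by
          rcases hhitf with ⟨h, -⟩ | ⟨h, -⟩
          · exact absurd h hInB'
          · exact h
        rw [InArc] at hcA
        set s : ℕ := (c - g).val with hss
        -- s ≠ n-1-j for j < k (those points are matched to n+j ≠ n+k)
        have hsne : ∀ j : ℕ, j < k → s ≠ n - 1 - j := by
          intro j hj hsj
          have hIHj := IH j (by omega) (by omega)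
          have hcform : c = g + ((n - 1 - j : ℕ) : ZMod (2 * n)) := by
            apply idx_inj (g := g)
            rw [← hss, hsj, val_shift g (by omega)]
          have hcmem : c ∈ ({g + ((n - 1 - j : ℕ) : ZMod (2 * n)),
              g + ((n + j : ℕ) : ZMod (2 * n))} : Finset (ZMod (2 * n))) := by
            rw [hcform]; exact Finset.mem_insert_self _ _
          have hcf : c ∈ f := hfpair ▸ Finset.mem_insert_of_mem (Finset.mem_singleton_self _)
          have hfeq := huniq f hfT _ hIHj c hcf hcmem
          have hb'mem : b' ∈ ({g + ((n - 1 - j : ℕ) : ZMod (2 * n)),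
              g + ((n + j : ℕ) : ZMod (2 * n))} : Finset (ZMod (2 * n))) := hfeq ▸ hb'f
          rcases Finset.mem_insert.mp hb'mem with h | h
          · have := congrArg (fun z => (z - g).val) h
            simp only [hib', val_shift g (show n - 1 - j < 2 * n by omega)] at this
            omega
          · rw [Finset.mem_singleton] at h
            have := congrArg (fun z => (z - g).val) h
            simp only [hib', val_shift g (show n + j < 2 * n by omega)] at this
            omega
        -- s ≠ n-1-k (that point is a, matched to b ≠ b')
        have hsnek : s ≠ n - 1 - k := by
          intro hsk
          have hca : c = a := by
            apply idx_inj (g := g)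
            rw [← hss, hsk, hia]
          have hcf : c ∈ f := hfpair ▸ Finset.mem_insert_of_mem (Finset.mem_singleton_self _)
          have hfeq := huniq f hfT e heT a (hca ▸ hcf) hae
          have hb'e : b' ∈ e := hfeq ▸ hb'f
          rw [hepair] at hb'e
          rcases Finset.mem_insert.mp hb'e with h | h
          · have := congrArg (fun z => (z - g).val) h
            simp only [hib', hia] at this
            omega
          · rw [Finset.mem_singleton] at h
            have := congrArg (fun z => (z - g).val) h
            simp only [hib', hibval] at this
            omega
        have hslt : s < n - 1 - k := by
          by_contra hge
          push_neg at hge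
          have : s = n - 1 - (n - 1 - s) := by omega
          exact hsne (n - 1 - s) (by omega) this
        -- now f = {c, b'} and e = {a, b} cross
        have hcross : Crosses n {c, b'} {a, b} :=
          crosses_of_idx g c b' a b (by rw [← hss, hia]; omega)
            (by rw [hia, hib']; omega) (by rw [hib', hibval]; omega)
        refine hT.noncrossing f hfT e heT ?_
        rw [hfpair, hepair, Finset.pair_comm b' c]
        exact hcross
      rw [htkk] at hbform
      rw [← hbform, ← hepair]
      exact heT
  -- reindex: for k < n, {g+k, g-1-k} ∈ T
  have hcast : ∀ k : ℕ, k < n →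
      g + ((2 * n - 1 - k : ℕ) : ZMod (2 * n)) = g - 1 - (k : ZMod (2 * n)) := by
    intro k hk
    have h1 : (2 * n - 1 - k : ℕ) = 2 * n - (1 + k) := by omega
    have h2 : ((2 * n - (1 + k) : ℕ) : ZMod (2 * n)) = -(1 + (k : ZMod (2 * n))) := by
      rw [Nat.cast_sub (by omega), Nat.cast_add, Nat.cast_one, ZMod.natCast_self]
      ring
    rw [h1, h2]
    ring
  have hmem : ∀ k : ℕ, k < n →
      ({g + (k : ZMod (2 * n)), g - 1 - (k : ZMod (2 * n))} :
        Finset (ZMod (2 * n))) ∈ T := by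
    intro k hk
    have := key (n - 1 - k) (by omega)
    have e1 : n - 1 - (n - 1 - k) = k := by omega
    have e2 : n + (n - 1 - k) = 2 * n - 1 - k := by omega
    rw [e1, e2, hcast k hk] at this
    exact this
  -- injectivity of the parallel chords map
  have hinj : Set.InjOn
      (fun k : ℕ => ({g + (k : ZMod (2 * n)), g - 1 - (k : ZMod (2 * n))} :
        Finset (ZMod (2 * n)))) (Finset.range n) := by
    intro k hk k' hk' heq
    simp only [Finset.coe_range, Set.mem_Iio] at hk hk'
    replace heq : ({g + (k : ZMod (2 * n)), g - 1 - (k : ZMod (2 * n))} :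
        Finset (ZMod (2 * n)))
        = ({g + (k' : ZMod (2 * n)), g - 1 - (k' : ZMod (2 * n))} :
        Finset (ZMod (2 * n))) := heq
    have hmem1 : g + (k : ZMod (2 * n)) ∈
        ({g + (k' : ZMod (2 * n)), g - 1 - (k' : ZMod (2 * n))} :
          Finset (ZMod (2 * n))) := heq ▸ Finset.mem_insert_self _ _
    have hv : ∀ m : ℕ, m < n → (g + (m : ZMod (2 * n)) - g).val = m := by
      intro m hm; exact val_shift g (by omega)
    rcases Finset.mem_insert.mp hmem1 with h | h
    · have := congrArg (fun z => (z - g).val) h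
      simp only [hv k hk, hv k' hk'] at this
      exact this
    · rw [Finset.mem_singleton, ← hcast k' hk'] at h
      have := congrArg (fun z => (z - g).val) h
      simp only [hv k hk, val_shift g (show 2 * n - 1 - k' < 2 * n by omega)] at this
      omega
  have hTeq : T = (Finset.range n).image
      (fun k : ℕ => ({g + (k : ZMod (2 * n)), g - 1 - (k : ZMod (2 * n))} :
        Finset (ZMod (2 * n)))) := by
    symm
    apply Finset.eq_of_subset_of_card_le
    · intro e he
      obtain ⟨k, hk, rfl⟩ := Finset.mem_image.mp he
      exact hmem k (Finset.mem_range.mp hk)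
    · rw [Finset.card_image_of_injOn hinj, Finset.card_range, hcardT]
  refine ⟨hTeq, ?_⟩
  -- part 2: hit counts of the parallel split
  intro j hj
  have hjn : j ≤ n := le_trans hj (Nat.div_le_self n 2)
  -- which chords hit D_{g+j}
  have hhits : ∀ k : ℕ, k < n →
      (HitsDiam n (g + (j : ZMod (2 * n)))
        ({g + (k : ZMod (2 * n)), g - 1 - (k : ZMod (2 * n))} : Finset (ZMod (2 * n)))
        ↔ (j ≤ k ∧ k < n - j)) := by
    intro k hk
    have hne : g + (k : ZMod (2 * n)) ≠ g - 1 - (k : ZMod (2 * n)) := by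
      rw [← hcast k hk]
      apply idx_ne (g := g)
      rw [val_shift g (show k < 2 * n by omega),
        val_shift g (show 2 * n - 1 - k < 2 * n by omega)]
      omega
    rw [hits_pair hne]
    -- arc membership of the first endpoint
    have harc1 : InArc n (g + (j : ZMod (2 * n))) (g + (k : ZMod (2 * n))) ↔ j ≤ k := by
      unfold InArc
      have hd : g + (k : ZMod (2 * n)) - (g + (j : ZMod (2 * n)))
          = (k : ZMod (2 * n)) - (j : ZMod (2 * n)) := by ring
      rw [hd]
      by_cases hjk : j ≤ k
      · rw [← Nat.cast_sub hjk, ZMod.val_cast_of_lt (show k - j < 2 * n by omega)]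
        constructor
        · intro _; exact hjk
        · intro _; omega
      · push_neg at hjk
        have hrw : (k : ZMod (2 * n)) = ((2 * n + k : ℕ) : ZMod (2 * n)) := by
          rw [Nat.cast_add, ZMod.natCast_self, zero_add]
        rw [hrw, ← Nat.cast_sub (show j ≤ 2 * n + k by omega),
          ZMod.val_cast_of_lt (show 2 * n + k - j < 2 * n by omega)]
        constructor
        · intro h; omega
        · intro h; omega
    have harc2 : InArc n (g + (j : ZMod (2 * n))) (g - 1 - (k : ZMod (2 * n)))
        ↔ n - j ≤ k := by
      unfold InArc
      rw [← hcast k hk]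
      have hd : g + ((2 * n - 1 - k : ℕ) : ZMod (2 * n)) - (g + (j : ZMod (2 * n)))
          = ((2 * n - 1 - k : ℕ) : ZMod (2 * n)) - (j : ZMod (2 * n)) := by ring
      rw [hd, ← Nat.cast_sub (show j ≤ 2 * n - 1 - k by omega),
        ZMod.val_cast_of_lt (show 2 * n - 1 - k - j < 2 * n by omega)]
      omega
    rw [harc1, harc2]
    unfold Xor'
    by_cases h1 : j ≤ k <;> by_cases h2 : n - j ≤ k <;> simp [Xor', h1, h2] <;> omega
  -- compute the count
  rw [hitCount, hTeq, Finset.filter_image,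
    Finset.card_image_of_injOn (hinj.mono (by
      intro x hx
      simp only [Finset.coe_filter, Set.mem_setOf_eq] at hx
      simpa using hx.1))]
  have hfilter : (Finset.range n).filter
      (fun k : ℕ => HitsDiam n (g + (j : ZMod (2 * n)))
        ({g + (k : ZMod (2 * n)), g - 1 - (k : ZMod (2 * n))} : Finset (ZMod (2 * n))))
      = Finset.Ico j (n - j) := by
    ext k
    simp only [Finset.mem_filter, Finset.mem_range, Finset.mem_Ico]
    constructor
    · rintro ⟨hk, hh⟩
      exact (hhits k hk).mp hh
    · rintro ⟨h1, h2⟩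
      have hk : k < n := by omega
      exact ⟨hk, (hhits k hk).mpr ⟨h1, h2⟩⟩
  rw [hfilter, Nat.card_Ico]
  omega

end MultiCrossing
end

section
/- For every split S of 2n points and all g, g' ∈ ZMod (2n), one has (f_S(g+1) − 2·cr_S(g+1, g')) − (f_S(g) − 2·cr_S(g, g')) ≤ 2; that is, rotating the overstrand past one endpoint at each end increases the quantity f_S − 2·cr_S(·, g') by at most 2. -/
attribute [local instance] Classical.propDecidable

namespace MultiCrossing

lemma inArc_step (n : ℕ) (hn : 1 ≤ n) (g x : ZMod (2 * n))
    (hx0 : x ≠ g) (hxn : x ≠ g + n) :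
    InArc n (g + 1) x ↔ InArc n g x := by
  have h2n : 0 < 2 * n := by omega
  haveI : NeZero (2 * n) := ⟨by omega⟩
  set y := x - g with hy
  have hy0 : y ≠ 0 := sub_ne_zero.mpr hx0
  have hv0 : y.val ≠ 0 := fun h => hy0 (by
    have := (ZMod.val_eq_zero y).mp h; exact this)
  have hvn : y.val ≠ n := by
    intro h
    apply hxn
    have : y = (n : ZMod (2 * n)) := by
      have hyc : ((y.val : ℕ) : ZMod (2 * n)) = y := by
        rw [ZMod.natCast_val, ZMod.cast_id]
      rw [← hyc, h]
    have : x - g = n := this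
    rw [sub_eq_iff_eq_add'] at this
    exact this
  have hvlt : y.val < 2 * n := ZMod.val_lt y
  have hsub : x - (g + 1) = y - 1 := by rw [hy]; ring
  have hval : (y - 1).val = y.val - 1 := by
    have h1 : ((y.val - 1 : ℕ) : ZMod (2 * n)) = y - 1 := by
      push_cast [Nat.cast_sub (by omega : 1 ≤ y.val)]
      rw [ZMod.natCast_val, ZMod.cast_id]
    rw [← h1, ZMod.val_cast_of_lt (by omega)]
  unfold InArc
  rw [hsub, hval, ← hy]
  omega

lemma hitsDiam_step (n : ℕ) (hn : 1 ≤ n) (g : ZMod (2 * n)) (e : Finset (ZMod (2 * n)))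
    (h0 : g ∉ e) (h1 : g + n ∉ e) :
    HitsDiam n (g + 1) e ↔ HitsDiam n g e := by
  unfold HitsDiam
  have : e.filter (fun x => InArc n (g + 1) x) = e.filter (fun x => InArc n g x) := by
    apply Finset.filter_congr
    intro x hx
    exact inArc_step n hn g x (fun h => h0 (h ▸ hx)) (fun h => h1 (h ▸ hx))
  rw [this]

/-- For every split `S` of `2n` points and all `g, g' ∈ ZMod (2n)`, rotating the overstrand
past one endpoint at each end increases the quantity `f_S - 2·cr_S(·,g')` by at most `2`:
`(f_S(g+1) - 2·cr_S(g+1,g')) - (f_S(g) - 2·cr_S(g,g')) ≤ 2`. -/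
theorem hitCount_sub_two_crossHitCount_step (n : ℕ) (hn : 1 ≤ n)
    (S : Finset (Finset (ZMod (2 * n)))) (hS : IsSplit n S) (g g' : ZMod (2 * n)) :
    ((hitCount n S (g + 1) : ℤ) - 2 * (crossHitCount n S (g + 1) g' : ℤ))
      - ((hitCount n S g : ℤ) - 2 * (crossHitCount n S g g' : ℤ)) ≤ 2 := by
  classical
  set w : Finset (ZMod (2 * n)) → ℤ := fun e =>
    ((if HitsDiam n (g + 1) e then (1 : ℤ) else 0)
      - 2 * (if HitsDiam n (g + 1) e ∧ HitsDiam n g' e then (1 : ℤ) else 0))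
    - ((if HitsDiam n g e then (1 : ℤ) else 0)
      - 2 * (if HitsDiam n g e ∧ HitsDiam n g' e then (1 : ℤ) else 0)) with hw
  have total :
      ((hitCount n S (g + 1) : ℤ) - 2 * (crossHitCount n S (g + 1) g' : ℤ))
        - ((hitCount n S g : ℤ) - 2 * (crossHitCount n S g g' : ℤ))
      = ∑ e ∈ S, w e := by
    simp only [hw, hitCount, crossHitCount, Finset.card_filter]
    push_cast
    rw [Finset.mul_sum, Finset.mul_sum, ← Finset.sum_sub_distrib, ← Finset.sum_sub_distrib,
      ← Finset.sum_sub_distrib]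
  set P : Finset (ZMod (2 * n)) → Prop := fun e => g ∈ e ∨ g + n ∈ e with hP
  have hw0 : ∀ e ∈ S, ¬ P e → w e = 0 := by
    intro e _ hne
    simp only [hP] at hne
    push_neg at hne
    have hiff := hitsDiam_step n hn g e hne.1 hne.2
    simp only [hw, hiff]
    ring
  have hw1 : ∀ e, w e ≤ 1 := by
    intro e
    simp only [hw]
    split_ifs <;> simp_all
  have hfe : ∑ e ∈ S, w e = ∑ e ∈ S.filter P, w e := by
    refine (Finset.sum_filter_of_ne ?_).symm
    intro e he hne
    by_contra h
    exact hne (hw0 e he h)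
  obtain ⟨e1, ⟨he1S, hge1⟩, hu1⟩ := hS.partitions g
  obtain ⟨e2, ⟨he2S, hge2⟩, hu2⟩ := hS.partitions (g + n)
  have hsub : S.filter P ⊆ {e1, e2} := by
    intro e he
    rw [Finset.mem_filter] at he
    obtain ⟨heS, hPe⟩ := he
    rcases hPe with h | h
    · exact Finset.mem_insert.mpr (Or.inl (hu1 e ⟨heS, h⟩))
    · exact Finset.mem_insert.mpr (Or.inr (Finset.mem_singleton.mpr (hu2 e ⟨heS, h⟩)))
  have hcard : (S.filter P).card ≤ 2 := by
    calc (S.filter P).card ≤ ({e1, e2} : Finset _).card := Finset.card_le_card hsub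
    _ ≤ 2 := by
        refine (Finset.card_insert_le _ _).trans ?_
        simp
  calc ((hitCount n S (g + 1) : ℤ) - 2 * (crossHitCount n S (g + 1) g' : ℤ))
        - ((hitCount n S g : ℤ) - 2 * (crossHitCount n S g g' : ℤ))
      = ∑ e ∈ S.filter P, w e := by rw [total, hfe]
    _ ≤ ∑ _e ∈ S.filter P, (1 : ℤ) := Finset.sum_le_sum (fun e _ => hw1 e)
    _ = (S.filter P).card := by simp
    _ ≤ 2 := by exact_mod_cast hcard

end MultiCrossing
end
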